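/- For all N ≥ 0 and all tuples vI = (i_0,…,i_N), vJ = (j_0,…,j_N) ∈ C^{N+1} with i_0 = j_0: (a) S(vI,vJ) = S(vJ,vI); (b) if the set of entries {i_0,…,i_N} is different from the set of entries {j_0,…,j_N}, then S(vI,vJ) = 0. -/

import Mathlib

/- STATEMENT 1.
Fix a finite index set `C` and a symmetric map `a : C × C → ℂ`.  For tuples
`vI = (i₀,…,i_N)`, `vJ = (j₀,…,j_N)` with `i₀ = j₀` the Shapovalov numbers `S(vI,vJ)` are
defined recursively by `S((i),(i)) = 1` and
`S(vI,vJ) = ∑_{q ∈ [N] : i_q = j_N} (∑_{p=0}^{q−1} a(i_p,j_N)) · S(vI∖i_q, vJ∖j_N)`.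
The theorem asserts (a) symmetry `S(vI,vJ) = S(vJ,vI)`, and (b) `S(vI,vJ) = 0` whenever the
sets of entries of `vI` and `vJ` differ. -/

noncomputable section

/-- Recursive definition of `S(vI,vJ)`, where the second sequence is given in *reversed*
order (so the recursion removes its head, i.e. the last entry `j_N` of `vJ`).  The entry
removed from `vI` is at position `q ∈ {1,…,N}` (the zeroth entry `i₀` is never removed). -/
def Ssym0 {C : Type} [DecidableEq C] (a : C → C → ℂ) : List C → List C → ℂ
  | _, [] => 0
  | vI, [j] => if vI = [j] then 1 else 0
  | vI, j :: rest =>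
    ∑ q : Fin vI.length,
      if q.val ≠ 0 ∧ vI.get q = j then
        (∑ p : Fin vI.length, if p < q then a (vI.get p) j else 0)
          * Ssym0 a (vI.eraseIdx q) rest
      else 0

/-- `S(vI,vJ)` for sequences `vI = (i₀,…,i_N)`, `vJ = (j₀,…,j_N)` with `i₀ = j₀`. -/
def Sfun0 {C : Type} [DecidableEq C] (a : C → C → ℂ) (vI vJ : List C) : ℂ :=
  Ssym0 a vI vJ.reverse

section Helpers

set_option linter.unusedSectionVars false

variable {C : Type} [DecidableEq C] (a : C → C → ℂ)


lemma Ssym0_nil (vI : List C) : Ssym0 a vI [] = 0 := rfl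

lemma Ssym0_single (vI : List C) (j : C) : Ssym0 a vI [j] = if vI = [j] then 1 else 0 := rfl

lemma Ssym0_cons (vI : List C) (j : C) (rest : List C) (h : rest ≠ []) :
    Ssym0 a vI (j :: rest) =
      ∑ q : Fin vI.length,
        if q.val ≠ 0 ∧ vI.get q = j then
          (∑ p : Fin vI.length, if p < q then a (vI.get p) j else 0)
            * Ssym0 a (vI.eraseIdx q) rest
        else 0 := by
  cases rest with
  | nil => exact absurd rfl h
  | cons r rs => rfl

lemma perm_eraseIdx (l : List C) (q : ℕ) (h : q < l.length) :
    l.Perm (l[q] :: l.eraseIdx q) := by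
  conv_lhs => rw [← List.take_append_drop q l, ← List.getElem_cons_drop h]
  rw [List.eraseIdx_eq_take_drop_succ]
  exact List.perm_middle

lemma multiset_eraseIdx (l : List C) (q : ℕ) (h : q < l.length) :
    (l : Multiset C) = l[q] ::ₘ (l.eraseIdx q : List C) := by
  have := perm_eraseIdx l q h
  exact Multiset.coe_eq_coe.mpr this

lemma head?_eraseIdx_of_ne_zero (u : List C) (q : ℕ) (hq : q ≠ 0) :
    (u.eraseIdx q).head? = u.head? := by
  cases u with
  | nil => simp
  | cons c t =>
    cases q with
    | zero => exact absurd rfl hq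
    | succ s => simp [List.eraseIdx]

lemma sum_get_map (f : C → ℂ) (u : List C) :
    ∑ p : Fin u.length, f (u.get p) = (u.map f).sum := by
  rw [← Fin.sum_univ_getElem (u.map f)]
  rw [← Fin.sum_congr' _ (by simp : u.length = (u.map f).length)]
  apply Finset.sum_congr rfl
  intro p _
  simp


lemma Ssym0_vanish : ∀ (L vI : List C), Ssym0 a vI L ≠ 0 → (vI : Multiset C) = (L : Multiset C) := by
  intro L
  induction L with
  | nil => intro vI h; exact absurd (Ssym0_nil a vI) h
  | cons j rest ih =>
    intro vI h
    cases rest with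
    | nil =>
      rw [Ssym0_single] at h
      by_cases hv : vI = [j]
      · rw [hv]
      · rw [if_neg hv] at h; exact absurd rfl h
    | cons r rs =>
      rw [Ssym0_cons a vI j (r :: rs) (List.cons_ne_nil r rs)] at h
      obtain ⟨q, -, hq⟩ := Finset.exists_ne_zero_of_sum_ne_zero h
      by_cases hc : q.val ≠ 0 ∧ vI.get q = j
      · rw [if_pos hc] at hq
        have h2 : Ssym0 a (vI.eraseIdx q) (r :: rs) ≠ 0 := right_ne_zero_of_mul hq
        have h3 := ih (vI.eraseIdx q) h2
        have h4 := multiset_eraseIdx vI q.val q.isLt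
        rw [h4, h3]
        have : vI[q.val] = j := hc.2
        rw [this]
        rfl
      · rw [if_neg hc] at hq; exact absurd rfl hq


lemma Sfun0_expand (u v : List C) (w : C) (hv : v ≠ []) :
    Sfun0 a u (v ++ [w]) =
      ∑ q : Fin u.length,
        if q.val ≠ 0 ∧ u.get q = w then
          (∑ p : Fin u.length, if p < q then a (u.get p) w else 0)
            * Sfun0 a (u.eraseIdx q) v else 0 := by
  unfold Sfun0
  have h1 : (v ++ [w]).reverse = w :: v.reverse := by simp
  rw [h1, Ssym0_cons a u w v.reverse (by simpa using hv)]

lemma weight_split (x' : List C) (k w : C) (i : ℕ) (hi : i ≤ x'.length) :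
    (∑ p : Fin (x' ++ [k]).length, if p.val < i then a ((x' ++ [k]).get p) w else 0)
      = ∑ p : Fin x'.length, if p.val < i then a (x'.get p) w else 0 := by
  have hlen : x'.length + 1 = (x' ++ [k]).length := by simp
  rw [← Fin.sum_congr' _ hlen, Fin.sum_univ_castSucc]
  rw [if_neg (by simp only [Fin.coe_cast, Fin.val_last, not_lt]; exact hi), add_zero]
  apply Finset.sum_congr rfl
  intro p _
  have hv : (Fin.cast hlen p.castSucc).val = p.val := rfl
  rw [hv]
  by_cases hp : p.val < i
  · rw [if_pos hp, if_pos hp]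
    congr 1
    show (x' ++ [k])[(p : ℕ)] = x'.get p
    exact List.getElem_append_left p.isLt
  · rw [if_neg hp, if_neg hp]

lemma Sfun0_expand_append (x' : List C) (k w : C) (v : List C) (hx : x' ≠ []) (hv : v ≠ []) :
    Sfun0 a (x' ++ [k]) (v ++ [w]) =
      (if k = w then (∑ p : Fin x'.length, a (x'.get p) w) * Sfun0 a x' v else 0)
      + ∑ q : Fin x'.length,
          if q.val ≠ 0 ∧ x'.get q = w then
            (∑ p : Fin x'.length, if p < q then a (x'.get p) w else 0)
              * Sfun0 a (x'.eraseIdx q ++ [k]) v else 0 := by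
  rw [Sfun0_expand a (x' ++ [k]) v w hv]
  have hlen : x'.length + 1 = (x' ++ [k]).length := by simp
  rw [← Fin.sum_congr' _ hlen, Fin.sum_univ_castSucc, add_comm]
  congr 1
  -- last term
  · have hval : (Fin.cast hlen (Fin.last x'.length)).val = x'.length := rfl
    have hget : (x' ++ [k]).get (Fin.cast hlen (Fin.last x'.length)) = k := by
      show (x' ++ [k])[x'.length] = k
      rw [List.getElem_append_right (le_refl x'.length)]
      simp
    have hne : x'.length ≠ 0 := by simpa using hx
    have herase : (x' ++ [k]).eraseIdx x'.length = x' := by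
      rw [List.eraseIdx_append_of_length_le (le_refl x'.length)]
      simp
    rw [hget]
    by_cases hkw : k = w
    · rw [if_pos ⟨hne, hkw⟩, if_pos hkw]
      congr 1
      · have : ∀ p : Fin (x' ++ [k]).length,
            (p < Fin.cast hlen (Fin.last x'.length)) = (p.val < x'.length) := by
          intro p; rw [Fin.lt_def, hval]
        simp only [this]
        rw [weight_split a x' k w x'.length (le_refl _)]
        apply Finset.sum_congr rfl
        intro p _
        rw [if_pos p.isLt]
      · show Sfun0 a ((x' ++ [k]).eraseIdx x'.length) v = Sfun0 a x' v
        rw [herase]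
    · rw [if_neg (by tauto), if_neg hkw]
  -- castSucc terms
  · apply Finset.sum_congr rfl
    intro q _
    have hval : (Fin.cast hlen q.castSucc).val = q.val := rfl
    have hget : (x' ++ [k]).get (Fin.cast hlen q.castSucc) = x'.get q := by
      show (x' ++ [k])[(q : ℕ)] = x'.get q
      exact List.getElem_append_left q.isLt
    rw [hget]
    by_cases hc : q.val ≠ 0 ∧ x'.get q = w
    · rw [if_pos (by exact ⟨hc.1, hc.2⟩), if_pos hc]
      congr 1
      · have : ∀ p : Fin (x' ++ [k]).length,
            (p < Fin.cast hlen q.castSucc) = (p.val < q.val) := by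
          intro p; rw [Fin.lt_def, hval]
        simp only [this]
        rw [weight_split a x' k w q.val (le_of_lt q.isLt)]
        apply Finset.sum_congr rfl
        intro p _
        simp only [Fin.lt_def]
      · show Sfun0 a ((x' ++ [k]).eraseIdx q.val) v = _
        rw [List.eraseIdx_append_of_lt_length q.isLt]
    · rw [if_neg (by tauto), if_neg hc]


lemma Sfun0_symm : ∀ (n : ℕ) (x y : List C), x.length = n → y.length = n →
    x.head? = y.head? → Sfun0 a x y = Sfun0 a y x := by
  intro n
  induction n using Nat.strong_induction_on with
  | _ n ih =>
  match n with
  | 0 => intro x y hx hy _; rw [List.length_eq_zero_iff.mp hx, List.length_eq_zero_iff.mp hy]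
  | 1 =>
    intro x y hx hy hh
    obtain ⟨c, rfl⟩ := List.length_eq_one_iff.mp hx
    obtain ⟨d, rfl⟩ := List.length_eq_one_iff.mp hy
    simp only [List.head?_cons, Option.some.injEq] at hh
    rw [hh]
  | (m+2) =>
    intro x y hx hy hh
    have hxne : x ≠ [] := by intro h; rw [h] at hx; simp at hx
    have hyne : y ≠ [] := by intro h; rw [h] at hy; simp at hy
    obtain ⟨x', k, rfl⟩ : ∃ x' k, x = x' ++ [k] :=
      ⟨_, _, (List.dropLast_append_getLast hxne).symm⟩
    obtain ⟨y', l, rfl⟩ : ∃ y' l, y = y' ++ [l] :=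
      ⟨_, _, (List.dropLast_append_getLast hyne).symm⟩
    have hx' : x'.length = m + 1 := by simpa using hx
    have hy' : y'.length = m + 1 := by simpa using hy
    have hx'ne : x' ≠ [] := by intro h; rw [h] at hx'; simp at hx'
    have hy'ne : y' ≠ [] := by intro h; rw [h] at hy'; simp at hy'
    have hh' : x'.head? = y'.head? := by
      rwa [List.head?_append_of_ne_nil _ hx'ne, List.head?_append_of_ne_nil _ hy'ne] at hh
    rw [Sfun0_expand_append a x' k l y' hx'ne hy'ne,
        Sfun0_expand_append a y' l k x' hy'ne hx'ne]
    have hAB : (if k = l then (∑ p : Fin x'.length, a (x'.get p) l) * Sfun0 a x' y' else 0)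
        = (if l = k then (∑ p : Fin y'.length, a (y'.get p) k) * Sfun0 a y' x' else 0) := by
      by_cases hkl : k = l
      · subst hkl
        rw [if_pos rfl, if_pos rfl]
        have hxy := ih (m + 1) (by omega) x' y' hx' hy' hh'
        rw [← hxy]
        by_cases h0 : Sfun0 a x' y' = 0
        · rw [h0, mul_zero, mul_zero]
        · have hm : (↑x' : Multiset C) = ↑y' := by
            have h1 := Ssym0_vanish a y'.reverse x' h0
            rwa [Multiset.coe_reverse] at h1
          congr 1
          have e0 : ∀ u : List C, (∑ p : Fin u.length, a (u.get p) k)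
              = ((↑u : Multiset C).map (fun c => a c k)).sum := by
            intro u
            rw [sum_get_map (fun c => a c k) u, Multiset.map_coe, Multiset.sum_coe]
          rw [e0 x', e0 y', hm]
      · rw [if_neg hkl, if_neg (Ne.symm hkl)]
    rw [hAB]
    congr 1
    -- the double sums
    have key : ∀ q : Fin x'.length,
        (if q.val ≠ 0 ∧ x'.get q = l then
            (∑ p : Fin x'.length, if p < q then a (x'.get p) l else 0)
              * Sfun0 a (x'.eraseIdx q ++ [k]) y' else 0)
        = ∑ r : Fin y'.length,
            if (q.val ≠ 0 ∧ x'.get q = l) ∧ (r.val ≠ 0 ∧ y'.get r = k) then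
              (∑ p : Fin x'.length, if p < q then a (x'.get p) l else 0) *
                ((∑ p : Fin y'.length, if p < r then a (y'.get p) k else 0) *
                  Sfun0 a (x'.eraseIdx q) (y'.eraseIdx r)) else 0 := by
      intro q
      by_cases hcq : q.val ≠ 0 ∧ x'.get q = l
      · rw [if_pos hcq]
        have hm1 : 1 ≤ m := by
          have h2 : (q : ℕ) < m + 1 := lt_of_lt_of_eq q.isLt hx'
          omega
        have le1 : (x'.eraseIdx q.val).length = m := by
          rw [List.length_eraseIdx]
          simp only [q.isLt, if_pos]
          omega
        have hene : x'.eraseIdx q.val ≠ [] := by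
          intro h; rw [h] at le1; simp at le1; omega
        have lh : (x'.eraseIdx q.val ++ [k]).length = m + 1 := by simp [le1]
        have hhd : (x'.eraseIdx q.val ++ [k]).head? = y'.head? := by
          rw [List.head?_append_of_ne_nil _ hene,
            head?_eraseIdx_of_ne_zero x' q.val hcq.1, hh']
        rw [ih (m + 1) (by omega) _ y' lh hy' hhd,
          Sfun0_expand a y' (x'.eraseIdx q.val) k hene, Finset.mul_sum]
        apply Finset.sum_congr rfl
        intro r _
        by_cases hcr : r.val ≠ 0 ∧ y'.get r = k
        · rw [if_pos hcr, if_pos ⟨hcq, hcr⟩]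
          have le2 : (y'.eraseIdx r.val).length = m := by
            rw [List.length_eraseIdx]
            simp only [r.isLt, if_pos]
            omega
          have hhd2 : (y'.eraseIdx r.val).head? = (x'.eraseIdx q.val).head? := by
            rw [head?_eraseIdx_of_ne_zero y' r.val hcr.1,
              head?_eraseIdx_of_ne_zero x' q.val hcq.1, hh']
          rw [ih m (by omega) _ _ le2 le1 hhd2]
        · rw [if_neg hcr, if_neg (by tauto), mul_zero]
      · rw [if_neg hcq]
        symm
        apply Finset.sum_eq_zero
        intro r _
        rw [if_neg (by tauto)]
    have key2 : ∀ r : Fin y'.length,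
        (if r.val ≠ 0 ∧ y'.get r = k then
            (∑ p : Fin y'.length, if p < r then a (y'.get p) k else 0)
              * Sfun0 a (y'.eraseIdx r ++ [l]) x' else 0)
        = ∑ q : Fin x'.length,
            if (q.val ≠ 0 ∧ x'.get q = l) ∧ (r.val ≠ 0 ∧ y'.get r = k) then
              (∑ p : Fin x'.length, if p < q then a (x'.get p) l else 0) *
                ((∑ p : Fin y'.length, if p < r then a (y'.get p) k else 0) *
                  Sfun0 a (x'.eraseIdx q) (y'.eraseIdx r)) else 0 := by
      intro r
      by_cases hcr : r.val ≠ 0 ∧ y'.get r = k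
      · rw [if_pos hcr]
        have hm1 : 1 ≤ m := by
          have h2 : (r : ℕ) < m + 1 := lt_of_lt_of_eq r.isLt hy'
          omega
        have le2 : (y'.eraseIdx r.val).length = m := by
          rw [List.length_eraseIdx]
          simp only [r.isLt, if_pos]
          omega
        have hene : y'.eraseIdx r.val ≠ [] := by
          intro h; rw [h] at le2; simp at le2; omega
        have lh : (y'.eraseIdx r.val ++ [l]).length = m + 1 := by simp [le2]
        have hhd : (y'.eraseIdx r.val ++ [l]).head? = x'.head? := by
          rw [List.head?_append_of_ne_nil _ hene,
            head?_eraseIdx_of_ne_zero y' r.val hcr.1, hh']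
        rw [ih (m + 1) (by omega) _ x' lh hx' hhd,
          Sfun0_expand a x' (y'.eraseIdx r.val) l hene, Finset.mul_sum]
        apply Finset.sum_congr rfl
        intro q _
        by_cases hcq : q.val ≠ 0 ∧ x'.get q = l
        · rw [if_pos hcq, if_pos ⟨hcq, hcr⟩]
          ring
        · rw [if_neg hcq, if_neg (by tauto), mul_zero]
      · rw [if_neg hcr]
        symm
        apply Finset.sum_eq_zero
        intro q _
        rw [if_neg (by tauto)]
    calc (∑ q : Fin x'.length, _) = _ := Finset.sum_congr rfl fun q _ => key q
      _ = _ := Finset.sum_comm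
      _ = _ := (Finset.sum_congr rfl fun r _ => (key2 r)).symm

end Helpers

theorem statement1 {C : Type} [DecidableEq C]
    (a : C → C → ℂ) (ha : ∀ i j, a i j = a j i)
    (N : ℕ) (vI vJ : List C)
    (hI : vI.length = N + 1) (hJ : vJ.length = N + 1)
    (hhead : vI.head? = vJ.head?) :
    Sfun0 a vI vJ = Sfun0 a vJ vI ∧
      (vI.toFinset ≠ vJ.toFinset → Sfun0 a vI vJ = 0) := by
  constructor
  · exact Sfun0_symm a (N + 1) vI vJ hI hJ hhead
  · intro hne
    by_contra h0
    apply hne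
    have h1 := Ssym0_vanish a vJ.reverse vI h0
    rw [Multiset.coe_reverse] at h1
    have h2 := congrArg Multiset.toFinset h1
    simpa using h2


end
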